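/- Pointwise decomposition of the predictive log-likelihood ratio under the Horseshoe prior (Lemma on g̃): Fix r > 0, set v = r/(1+r), and fix τ > 0. Define D(y) = ∫_ℝ exp(−μ²/2 + yμ) π(μ|τ) dμ and N_v(y,ỹ) = ∫_ℝ exp(−μ²/(2v) + (y + ỹ/r)μ) π(μ|τ) dμ. Then: (i) D(y) = (τ/π) ∫₀¹ u^{−1/2} (τ² + (1−τ²)u)^{−1} exp(y²u/2) du; (ii) N_v(y,ỹ) = (τ/(π√v)) ∫₀¹ u^{−1/2} (τ²/v + (1−τ²/v)u)^{−1} exp( (v/2)(y+ỹ/r)² u ) du; and (iii) for all θ, y, ỹ ∈ ℝ, log( φ_r(ỹ−θ) / p̂_π(ỹ|y) ) = ỹθ/r − θ²/(2r) − log N_v(y,ỹ) + log D(y), where p̂_π is the posterior predictive density under the Horseshoe prior π(·|τ). -/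

import Mathlib

open MeasureTheory
open scoped Classical

/-- Density of `N(0,s)`. -/
noncomputable def gauss (s x : ℝ) : ℝ :=
  (Real.sqrt (2 * Real.pi * s))⁻¹ * Real.exp (-x ^ 2 / (2 * s))

/-- Univariate Horseshoe prior density with global scale `τ`. -/
noncomputable def hs (τ θ : ℝ) : ℝ :=
  ∫ l in Set.Ioi (0 : ℝ), gauss (l ^ 2 * τ ^ 2) θ * ((2 / Real.pi) * (1 + l ^ 2)⁻¹)

/-- Univariate posterior predictive density under prior density `g`. -/
noncomputable def pred (r : ℝ) (g : ℝ → ℝ) (y ty : ℝ) : ℝ :=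
  (∫ μ : ℝ, gauss r (ty - μ) * gauss 1 (y - μ) * g μ) /
    ∫ μ : ℝ, gauss 1 (y - μ) * g μ

/-- `D(y)` from the pointwise decomposition of the predictive log-likelihood ratio. -/
noncomputable def Dfun (τ y : ℝ) : ℝ :=
  ∫ μ : ℝ, Real.exp (-μ ^ 2 / 2 + y * μ) * hs τ μ

/-- `N_v(y,ỹ)` from the pointwise decomposition of the predictive log-likelihood ratio. -/
noncomputable def Nvfun (r v τ y ty : ℝ) : ℝ :=
  ∫ μ : ℝ, Real.exp (-μ ^ 2 / (2 * v) + (y + ty / r) * μ) * hs τ μ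

open Real Set

lemma gauss_nonneg (s x : ℝ) : 0 ≤ gauss s x :=
  mul_nonneg (inv_nonneg.2 (Real.sqrt_nonneg _)) (Real.exp_pos _).le

lemma gauss_pos (s x : ℝ) (hs0 : 0 < s) : 0 < gauss s x :=
  mul_pos (inv_pos.2 (Real.sqrt_pos.2 (by positivity))) (Real.exp_pos _)

lemma gauss_cont (s : ℝ) : Continuous (gauss s) := by
  unfold gauss
  exact continuous_const.mul (((continuous_pow 2).neg.div_const _).rexp)

lemma integrable_e (c : ℝ) : Integrable (fun μ : ℝ => Real.exp (-μ ^ 2 / 2 + c * μ)) := by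
  have h : ∀ μ : ℝ, -μ ^ 2 / 2 + c * μ = -(1/2) * (μ - c) ^ 2 + c ^ 2 / 2 := by
    intro μ; ring
  simp_rw [h, Real.exp_add]
  exact (((integrable_exp_neg_mul_sq (by norm_num : (0:ℝ) < 1/2)).comp_sub_right c)).mul_const _

lemma integrable_e_gauss (s c : ℝ) (hs0 : 0 < s) :
    Integrable (fun μ : ℝ => Real.exp (-μ ^ 2 / 2 + c * μ) * gauss s μ) := by
  have h := (integrable_e c).bdd_mul (gauss_cont s).aestronglyMeasurable
    (c := (Real.sqrt (2 * Real.pi * s))⁻¹) (Filter.Eventually.of_forall fun x => by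
      rw [Real.norm_eq_abs, abs_of_nonneg (gauss_nonneg s x)]
      unfold gauss
      exact mul_le_of_le_one_right (inv_nonneg.2 (Real.sqrt_nonneg _))
        (Real.exp_le_one_iff.2 (div_nonpos_of_nonpos_of_nonneg (neg_nonpos.2 (sq_nonneg x)) (by positivity))))
  exact h.congr (Filter.Eventually.of_forall fun x => mul_comm _ _)

lemma measF (t c : ℝ) : AEStronglyMeasurable
    (fun p : ℝ × ℝ => Real.exp (-p.1 ^ 2 / 2 + c * p.1) *
      (gauss (p.2 ^ 2 * t ^ 2) p.1 * ((2 / Real.pi) * (1 + p.2 ^ 2)⁻¹)))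
    (volume.prod (volume.restrict (Set.Ioi 0))) := by
  apply Measurable.aestronglyMeasurable
  unfold gauss
  fun_prop

lemma gauss_lin (a c : ℝ) (ha : 0 < a) :
    ∫ μ : ℝ, Real.exp (-(a / 2) * μ ^ 2 + c * μ)
      = Real.sqrt (2 * Real.pi / a) * Real.exp (c ^ 2 / (2 * a)) := by
  have h : ∀ μ : ℝ, -(a / 2) * μ ^ 2 + c * μ = -(a / 2) * (μ - c / a) ^ 2 + c ^ 2 / (2 * a) := by
    intro μ; field_simp; ring
  simp_rw [h, Real.exp_add]
  rw [integral_mul_const,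
    integral_sub_right_eq_self (fun μ => Real.exp (-(a / 2) * μ ^ 2)) (c / a)]
  rw [integral_gaussian]
  congr 2
  field_simp

lemma inner_int (s c : ℝ) (hs0 : 0 < s) :
    ∫ μ : ℝ, Real.exp (-μ ^ 2 / 2 + c * μ) * gauss s μ
      = (Real.sqrt (1 + s))⁻¹ * Real.exp (c ^ 2 * s / (2 * (1 + s))) := by
  have hexp : ∀ μ : ℝ, Real.exp (-μ ^ 2 / 2 + c * μ) * gauss s μ
      = (Real.sqrt (2 * Real.pi * s))⁻¹ * Real.exp (-(((s + 1) / s) / 2) * μ ^ 2 + c * μ) := by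
    intro μ
    unfold gauss
    rw [← mul_assoc, mul_comm (Real.exp _) ((Real.sqrt _)⁻¹), mul_assoc, ← Real.exp_add]
    congr 2
    field_simp
    ring
  simp_rw [hexp]
  rw [integral_const_mul, gauss_lin _ c (by positivity)]
  have h1 : 2 * Real.pi / ((s + 1) / s) = (2 * Real.pi * s) / (s + 1) := by field_simp
  have h2 : c ^ 2 / (2 * ((s + 1) / s)) = c ^ 2 * s / (2 * (1 + s)) := by
    rw [add_comm 1 s]; field_simp
  rw [h1, h2, Real.sqrt_div (by positivity) (s + 1)]
  have h3 : Real.sqrt (2 * Real.pi * s) ≠ 0 := by positivity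
  rw [add_comm 1 s]
  field_simp

lemma hprod (t c : ℝ) (ht : 0 < t) : Integrable
    (fun p : ℝ × ℝ => Real.exp (-p.1 ^ 2 / 2 + c * p.1) *
      (gauss (p.2 ^ 2 * t ^ 2) p.1 * ((2 / Real.pi) * (1 + p.2 ^ 2)⁻¹)))
    (volume.prod (volume.restrict (Set.Ioi 0))) := by
  rw [integrable_prod_iff' (measF t c)]
  constructor
  · filter_upwards [self_mem_ae_restrict measurableSet_Ioi] with l hl
    have h := (integrable_e_gauss (l ^ 2 * t ^ 2) c
      (by have hl' : (0:ℝ) < l := hl; positivity)).mul_const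
      ((2 / Real.pi) * (1 + l ^ 2)⁻¹)
    exact h.congr (Filter.Eventually.of_forall fun μ => (mul_assoc _ _ _))
  · set G : ℝ → ℝ := fun l => (Real.sqrt (1 + l ^ 2 * t ^ 2))⁻¹ *
      Real.exp (c ^ 2 * (l ^ 2 * t ^ 2) / (2 * (1 + l ^ 2 * t ^ 2))) *
        ((2 / Real.pi) * (1 + l ^ 2)⁻¹) with hGdef
    have hG : Integrable G (volume.restrict (Set.Ioi 0)) := by
      apply Integrable.mono'
        (g := fun l => Real.exp (c ^ 2 / 2) * ((2 / Real.pi) * (1 + l ^ 2)⁻¹))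
      · exact (((integrable_inv_one_add_sq).const_mul _).const_mul _).restrict
      · apply Continuous.aestronglyMeasurable
        apply Continuous.mul
        apply Continuous.mul
        · exact (Real.continuous_sqrt.comp (by fun_prop)).inv₀
            (fun l => ne_of_gt (Real.sqrt_pos.2 (by positivity)))
        · exact Real.continuous_exp.comp (Continuous.div (by fun_prop) (by fun_prop)
            (fun l => by positivity))
        · exact continuous_const.mul ((continuous_const.add (continuous_pow 2)).inv₀
            (fun l => (by positivity : (0:ℝ) < 1 + l ^ 2).ne'))
      · filter_upwards with l
        have h1 : (Real.sqrt (1 + l ^ 2 * t ^ 2))⁻¹ ≤ 1 := by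
          rw [inv_le_one_iff₀]
          right
          rw [show (1:ℝ) = Real.sqrt 1 from (Real.sqrt_one).symm]
          exact Real.sqrt_le_sqrt (by nlinarith [sq_nonneg l, sq_nonneg t, Real.sqrt_one])
        have h2 : Real.exp (c ^ 2 * (l ^ 2 * t ^ 2) / (2 * (1 + l ^ 2 * t ^ 2)))
            ≤ Real.exp (c ^ 2 / 2) := by
          apply Real.exp_le_exp.2
          rw [div_le_div_iff₀ (by positivity) (by positivity)]
          nlinarith [sq_nonneg c, sq_nonneg (c*l*t), sq_nonneg (l*t)]
        have hnn : 0 ≤ G l := by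
          rw [hGdef]
          positivity
        rw [Real.norm_eq_abs, abs_of_nonneg hnn, hGdef]
        calc (Real.sqrt (1 + l ^ 2 * t ^ 2))⁻¹ *
            Real.exp (c ^ 2 * (l ^ 2 * t ^ 2) / (2 * (1 + l ^ 2 * t ^ 2))) *
              ((2 / Real.pi) * (1 + l ^ 2)⁻¹)
            ≤ 1 * Real.exp (c ^ 2 / 2) * ((2 / Real.pi) * (1 + l ^ 2)⁻¹) := by
              gcongr <;> positivity
          _ = Real.exp (c ^ 2 / 2) * ((2 / Real.pi) * (1 + l ^ 2)⁻¹) := by ring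
    apply hG.congr
    filter_upwards [self_mem_ae_restrict measurableSet_Ioi] with l hl
    have hpos : (0:ℝ) < l ^ 2 * t ^ 2 := by
      have : (0:ℝ) < l := hl
      positivity
    have hnn : ∀ μ : ℝ, ‖Real.exp (-μ ^ 2 / 2 + c * μ) *
        (gauss (l ^ 2 * t ^ 2) μ * ((2 / Real.pi) * (1 + l ^ 2)⁻¹))‖
        = Real.exp (-μ ^ 2 / 2 + c * μ) *
          (gauss (l ^ 2 * t ^ 2) μ * ((2 / Real.pi) * (1 + l ^ 2)⁻¹)) := by
      intro μ
      rw [Real.norm_eq_abs, abs_of_nonneg]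
      have := gauss_nonneg (l ^ 2 * t ^ 2) μ
      positivity
    rw [hGdef]
    simp_rw [hnn, ← mul_assoc]
    rw [integral_mul_const, integral_mul_const, inner_int _ c hpos]
    ring_nf

lemma subst_step (t c : ℝ) (ht : 0 < t) :
    ∫ l in Set.Ioi (0:ℝ), (Real.sqrt (1 + l ^ 2 * t ^ 2))⁻¹ *
        Real.exp (c ^ 2 * (l ^ 2 * t ^ 2) / (2 * (1 + l ^ 2 * t ^ 2))) *
          ((2 / Real.pi) * (1 + l ^ 2)⁻¹)
      = t / Real.pi * ∫ u in Set.Ioo (0:ℝ) 1,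
          u ^ (-(1:ℝ)/2) * (t ^ 2 + (1 - t ^ 2) * u)⁻¹ * Real.exp (c ^ 2 * u / 2) := by
  set g : ℝ → ℝ := fun u => t⁻¹ * Real.sqrt (u / (1 - u)) with hgdef
  set g' : ℝ → ℝ := fun u => t⁻¹ * (1 / (2 * Real.sqrt (u / (1 - u))) * (1 / (1 - u) ^ 2))
    with hg'def
  have himg : g '' Set.Ioo 0 1 = Set.Ioi (0:ℝ) := by
    ext l
    constructor
    · rintro ⟨u, ⟨hu0, hu1⟩, rfl⟩
      have h1u : (0:ℝ) < 1 - u := by linarith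
      have : 0 < Real.sqrt (u / (1 - u)) := Real.sqrt_pos.2 (div_pos hu0 h1u)
      simp only [hgdef]
      exact mul_pos (inv_pos.2 ht) this
    · intro hl
      have hl' : (0:ℝ) < l := hl
      have hs2 : (0:ℝ) < l ^ 2 * t ^ 2 := by positivity
      have hd : (0:ℝ) < 1 + l ^ 2 * t ^ 2 := by positivity
      refine ⟨l ^ 2 * t ^ 2 / (1 + l ^ 2 * t ^ 2), ⟨div_pos hs2 hd, (div_lt_one hd).2 (by linarith)⟩, ?_⟩
      have hu : l ^ 2 * t ^ 2 / (1 + l ^ 2 * t ^ 2) / (1 - l ^ 2 * t ^ 2 / (1 + l ^ 2 * t ^ 2))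
          = l ^ 2 * t ^ 2 := by
        have h1 : 1 - l ^ 2 * t ^ 2 / (1 + l ^ 2 * t ^ 2) = 1 / (1 + l ^ 2 * t ^ 2) := by
          field_simp
          ring
        rw [h1, div_div_div_cancel_right₀]
        · exact div_one _
        · exact hd.ne'
      simp only [hgdef]
      rw [hu, show l ^ 2 * t ^ 2 = (l * t) ^ 2 by ring, Real.sqrt_sq (by positivity)]
      field_simp
  have hderiv : ∀ u ∈ Set.Ioo (0:ℝ) 1, HasDerivWithinAt g (g' u) (Set.Ioo (0:ℝ) 1) u := by
    intro u hu
    obtain ⟨hu0, hu1⟩ := hu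
    have h1u : (0:ℝ) < 1 - u := by linarith
    have hw : HasDerivAt (fun u : ℝ => u / (1 - u)) ((1 * (1 - u) - u * (-1)) / (1 - u) ^ 2) u := by
      exact (hasDerivAt_id u).div (((hasDerivAt_id u).const_sub 1)) (by positivity)
    have hwpos : 0 < u / (1 - u) := div_pos hu0 h1u
    have hsq := (Real.hasDerivAt_sqrt hwpos.ne').comp u hw
    have h := hsq.const_mul t⁻¹
    have hval : t⁻¹ * (1 / (2 * Real.sqrt (u / (1 - u))) * ((1 * (1 - u) - u * (-1)) / (1 - u) ^ 2))
        = g' u := by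
      simp only [hg'def]
      congr 1
      congr 1
      rw [show 1 * (1 - u) - u * (-1) = 1 by ring]
    rw [hval] at h
    exact h.hasDerivWithinAt
  have hinj : Set.InjOn g (Set.Ioo 0 1) := by
    intro u1 h1 u2 h2 heq
    obtain ⟨h10, h11⟩ := h1
    obtain ⟨h20, h21⟩ := h2
    have e1 : Real.sqrt (u1 / (1 - u1)) = Real.sqrt (u2 / (1 - u2)) :=
      mul_left_cancel₀ (inv_ne_zero ht.ne') heq
    have h1u1 : (0:ℝ) < 1 - u1 := by linarith
    have h1u2 : (0:ℝ) < 1 - u2 := by linarith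
    have hw1 : (0:ℝ) < u1 / (1 - u1) := div_pos h10 h1u1
    have hw2 : (0:ℝ) < u2 / (1 - u2) := div_pos h20 h1u2
    have e2 : u1 / (1 - u1) = u2 / (1 - u2) := by
      rw [← Real.sq_sqrt hw1.le, ← Real.sq_sqrt hw2.le, e1]
    rw [div_eq_div_iff h1u1.ne' h1u2.ne'] at e2
    nlinarith
  rw [← himg, integral_image_eq_integral_abs_deriv_smul measurableSet_Ioo hderiv hinj,
    ← integral_const_mul]
  apply setIntegral_congr_fun measurableSet_Ioo
  intro u hu
  obtain ⟨hu0, hu1⟩ := hu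
  have h1u : (0:ℝ) < 1 - u := by linarith
  have hwpos : (0:ℝ) < u / (1 - u) := div_pos hu0 h1u
  have hsu : (0:ℝ) < Real.sqrt u := Real.sqrt_pos.2 hu0
  have hs1 : (0:ℝ) < Real.sqrt (1 - u) := Real.sqrt_pos.2 h1u
  have ew : (Real.sqrt (u / (1 - u))) ^ 2 = u / (1 - u) := Real.sq_sqrt hwpos.le
  simp only [hgdef, hg'def, smul_eq_mul]
  have e1 : (t⁻¹ * Real.sqrt (u / (1 - u))) ^ 2 * t ^ 2 = u / (1 - u) := by
    rw [mul_pow, ew]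
    field_simp
  have e2 : (t⁻¹ * Real.sqrt (u / (1 - u))) ^ 2 = u / (t ^ 2 * (1 - u)) := by
    rw [mul_pow, ew]
    field_simp
  rw [e1, e2]
  have e3 : 1 + u / (1 - u) = (1 - u)⁻¹ := by field_simp; ring
  rw [e3, Real.sqrt_inv, inv_inv]
  have e4 : u ^ (-(1:ℝ)/2) = (Real.sqrt u)⁻¹ := by
    rw [show (-(1:ℝ)/2) = -(1/2) by norm_num, Real.rpow_neg hu0.le, Real.sqrt_eq_rpow]
  rw [e4, Real.sqrt_div hu0.le]
  have eArg : c ^ 2 * (u / (1 - u)) / (2 * (1 - u)⁻¹) = c ^ 2 * u / 2 := by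
    field_simp
  rw [eArg]
  have ht2 : (0:ℝ) < t ^ 2 + (1 - t ^ 2) * u := by nlinarith
  have e5 : 1 + u / (t ^ 2 * (1 - u)) = (t ^ 2 + (1 - t ^ 2) * u) / (t ^ 2 * (1 - u)) := by
    field_simp
    ring
  rw [e5]
  have hsu2 : Real.sqrt u ^ 2 = u := Real.sq_sqrt hu0.le
  have hs12 : Real.sqrt (1 - u) ^ 2 = 1 - u := Real.sq_sqrt h1u.le
  rw [abs_of_nonneg (by positivity)]
  have key : Real.sqrt (1 - u) * Real.sqrt (1 - u) = 1 - u := Real.mul_self_sqrt h1u.le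
  rw [inv_div]
  field_simp
  rw [hs12]

lemma keyK (t c : ℝ) (ht : 0 < t) :
    ∫ μ : ℝ, Real.exp (-μ ^ 2 / 2 + c * μ) * hs t μ
      = t / Real.pi * ∫ u in Set.Ioo (0:ℝ) 1,
          u ^ (-(1:ℝ)/2) * (t ^ 2 + (1 - t ^ 2) * u)⁻¹ * Real.exp (c ^ 2 * u / 2) := by
  unfold hs
  have step1 : (∫ μ : ℝ, Real.exp (-μ ^ 2 / 2 + c * μ) *
        ∫ l in Set.Ioi (0:ℝ), gauss (l ^ 2 * t ^ 2) μ * ((2 / Real.pi) * (1 + l ^ 2)⁻¹))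
      = ∫ l in Set.Ioi (0:ℝ), ∫ μ : ℝ, Real.exp (-μ ^ 2 / 2 + c * μ) *
          (gauss (l ^ 2 * t ^ 2) μ * ((2 / Real.pi) * (1 + l ^ 2)⁻¹)) := by
    simp_rw [← integral_const_mul]
    exact integral_integral_swap (hprod t c ht)
  rw [step1]
  rw [setIntegral_congr_fun measurableSet_Ioi (g := fun l =>
    (Real.sqrt (1 + l ^ 2 * t ^ 2))⁻¹ *
      Real.exp (c ^ 2 * (l ^ 2 * t ^ 2) / (2 * (1 + l ^ 2 * t ^ 2))) *
        ((2 / Real.pi) * (1 + l ^ 2)⁻¹))]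
  · exact subst_step t c ht
  · intro l hl
    have hl' : (0:ℝ) < l := hl
    have hpos : (0:ℝ) < l ^ 2 * t ^ 2 := by positivity
    simp_rw [← mul_assoc]
    rw [integral_mul_const, integral_mul_const, inner_int _ c hpos]
    ring_nf

lemma keyPos (t c : ℝ) (ht : 0 < t) :
    0 < ∫ μ : ℝ, Real.exp (-μ ^ 2 / 2 + c * μ) * hs t μ := by
  have hInt : Integrable (fun μ : ℝ => Real.exp (-μ ^ 2 / 2 + c * μ) * hs t μ) := by
    have h := (hprod t c ht).integral_prod_left
    apply h.congr
    filter_upwards with μ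
    rw [integral_const_mul]
    rfl
  have hae : ∀ᵐ μ : ℝ, 0 < Real.exp (-μ ^ 2 / 2 + c * μ) * hs t μ := by
    filter_upwards [(hprod t c ht).prod_right_ae] with μ hμ
    have hInt2 : Integrable (fun l => gauss (l ^ 2 * t ^ 2) μ * ((2 / Real.pi) * (1 + l ^ 2)⁻¹))
        (volume.restrict (Set.Ioi 0)) := by
      have h2 := hμ.const_mul (Real.exp (-μ ^ 2 / 2 + c * μ))⁻¹
      apply h2.congr
      filter_upwards with l
      rw [← mul_assoc, inv_mul_cancel₀ (Real.exp_ne_zero _), one_mul]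
    have hhs : 0 < hs t μ := by
      unfold hs
      rw [integral_pos_iff_support_of_nonneg_ae
        (Filter.Eventually.of_forall fun l =>
          mul_nonneg (gauss_nonneg _ _) (by positivity)) hInt2]
      rw [Measure.restrict_apply' measurableSet_Ioi]
      have hsub : Set.Ioi (0:ℝ) ⊆ Function.support
          (fun l => gauss (l ^ 2 * t ^ 2) μ * ((2 / Real.pi) * (1 + l ^ 2)⁻¹)) ∩ Set.Ioi 0 := by
        intro l hl
        have hl' : (0:ℝ) < l := hl
        refine ⟨?_, hl⟩
        have := gauss_pos (l ^ 2 * t ^ 2) μ (by positivity)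
        have hc : (0:ℝ) < (2 / Real.pi) * (1 + l ^ 2)⁻¹ := by positivity
        exact (mul_pos this hc).ne'
      calc (0:ENNReal) < volume (Set.Ioi (0:ℝ)) := by rw [Real.volume_Ioi]; norm_num
        _ ≤ _ := measure_mono hsub
    exact mul_pos (Real.exp_pos _) hhs
  rw [integral_pos_iff_support_of_nonneg_ae (hae.mono fun μ h => h.le) hInt]
  by_contra hcon
  push_neg at hcon
  have h0 : volume (Function.support (fun μ : ℝ => Real.exp (-μ ^ 2 / 2 + c * μ) * hs t μ)) = 0 :=
    nonpos_iff_eq_zero.1 hcon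
  have h1 : volume ({μ : ℝ | ¬ (0 < Real.exp (-μ ^ 2 / 2 + c * μ) * hs t μ)}) = 0 := ae_iff.1 hae
  have h3 : volume (Set.univ : Set ℝ) ≤
      volume (Function.support (fun μ : ℝ => Real.exp (-μ ^ 2 / 2 + c * μ) * hs t μ)) +
        volume ({μ : ℝ | ¬ (0 < Real.exp (-μ ^ 2 / 2 + c * μ) * hs t μ)}) := by
    refine le_trans (measure_mono ?_) (measure_union_le _ _)
    intro μ _
    by_cases h : 0 < Real.exp (-μ ^ 2 / 2 + c * μ) * hs t μ
    · exact Or.inl h.ne'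
    · exact Or.inr h
  rw [h0, h1, add_zero, Real.volume_univ] at h3
  simp at h3

lemma hs_scale (τ a θ : ℝ) (hτ : 0 < τ) (ha : 0 < a) : hs τ (a * θ) = a⁻¹ * hs (τ / a) θ := by
  unfold hs
  rw [← integral_const_mul]
  apply setIntegral_congr_fun measurableSet_Ioi
  intro l hl
  have hl' : (0:ℝ) < l := hl
  unfold gauss
  dsimp only
  have h1 : 2 * Real.pi * (l ^ 2 * τ ^ 2) = a ^ 2 * (2 * Real.pi * (l ^ 2 * (τ / a) ^ 2)) := by
    field_simp
  have h2 : Real.sqrt (2 * Real.pi * (l ^ 2 * τ ^ 2))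
      = a * Real.sqrt (2 * Real.pi * (l ^ 2 * (τ / a) ^ 2)) := by
    rw [h1, Real.sqrt_mul (sq_nonneg a), Real.sqrt_sq ha.le]
  have h3 : -(a * θ) ^ 2 / (2 * (l ^ 2 * τ ^ 2)) = -θ ^ 2 / (2 * (l ^ 2 * (τ / a) ^ 2)) := by
    field_simp
  rw [h2, h3, mul_inv]
  ring

/-- Pointwise decomposition of the predictive log-likelihood ratio under the
Horseshoe prior (Lemma on g̃). -/
theorem horseshoe_pointwise_log_ratio_decomposition
    (r v τ : ℝ) (hr : 0 < r) (hv : v = r / (1 + r)) (hτ : 0 < τ) :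
    (∀ y : ℝ, Dfun τ y = τ / Real.pi *
      ∫ u in Set.Ioo (0 : ℝ) 1,
        u ^ (-(1 : ℝ) / 2) * (τ ^ 2 + (1 - τ ^ 2) * u)⁻¹ * Real.exp (y ^ 2 * u / 2)) ∧
    (∀ y ty : ℝ, Nvfun r v τ y ty = τ / (Real.pi * Real.sqrt v) *
      ∫ u in Set.Ioo (0 : ℝ) 1,
        u ^ (-(1 : ℝ) / 2) * (τ ^ 2 / v + (1 - τ ^ 2 / v) * u)⁻¹ *
          Real.exp (v / 2 * (y + ty / r) ^ 2 * u)) ∧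
    ∀ θ y ty : ℝ,
      Real.log (gauss r (ty - θ) / pred r (hs τ) y ty) =
        ty * θ / r - θ ^ 2 / (2 * r) - Real.log (Nvfun r v τ y ty) +
          Real.log (Dfun τ y) := by
  have hπ := Real.pi_pos
  have hv0 : 0 < v := by rw [hv]; positivity
  have hsv : 0 < Real.sqrt v := Real.sqrt_pos.2 hv0
  have hsv2 : Real.sqrt v ^ 2 = v := Real.sq_sqrt hv0.le
  have hNeq : ∀ y ty : ℝ, Nvfun r v τ y ty
      = ∫ ξ : ℝ, Real.exp (-ξ ^ 2 / 2 + (Real.sqrt v * (y + ty / r)) * ξ) * hs (τ / Real.sqrt v) ξ := by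
    intro y ty
    unfold Nvfun
    have h := MeasureTheory.Measure.integral_comp_mul_left
      (fun μ : ℝ => Real.exp (-μ ^ 2 / (2 * v) + (y + ty / r) * μ) * hs τ μ) (Real.sqrt v)
    rw [abs_of_pos (inv_pos.2 hsv), smul_eq_mul] at h
    have h3 : (fun x : ℝ => (fun μ : ℝ =>
          Real.exp (-μ ^ 2 / (2 * v) + (y + ty / r) * μ) * hs τ μ) (Real.sqrt v * x))
        = fun ξ : ℝ => (Real.sqrt v)⁻¹ *
            (Real.exp (-ξ ^ 2 / 2 + (Real.sqrt v * (y + ty / r)) * ξ) * hs (τ / Real.sqrt v) ξ) := by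
      funext ξ
      dsimp only
      rw [hs_scale τ (Real.sqrt v) ξ hτ hsv]
      have harg : -(Real.sqrt v * ξ) ^ 2 / (2 * v) + (y + ty / r) * (Real.sqrt v * ξ)
          = -ξ ^ 2 / 2 + (Real.sqrt v * (y + ty / r)) * ξ := by
        rw [mul_pow, hsv2]
        field_simp
      rw [harg]
      ring
    rw [h3, integral_const_mul] at h
    exact (mul_left_cancel₀ (inv_ne_zero hsv.ne') h).symm
  have hD : ∀ y : ℝ, 0 < Dfun τ y := fun y => keyPos τ y hτ
  have hN : ∀ y ty : ℝ, 0 < Nvfun r v τ y ty := fun y ty => by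
    rw [hNeq y ty]; exact keyPos _ _ (div_pos hτ hsv)
  refine ⟨fun y => keyK τ y hτ, ?_, ?_⟩
  · intro y ty
    rw [hNeq y ty, keyK (τ / Real.sqrt v) (Real.sqrt v * (y + ty / r)) (div_pos hτ hsv)]
    have hc : (τ / Real.sqrt v) ^ 2 = τ ^ 2 / v := by rw [div_pow, hsv2]
    have hc2 : ∀ u : ℝ, (Real.sqrt v * (y + ty / r)) ^ 2 * u / 2
        = v / 2 * (y + ty / r) ^ 2 * u := by
      intro u; rw [mul_pow, hsv2]; ring
    simp only [hc, hc2]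
    congr 1
    rw [div_div, mul_comm (Real.sqrt v) Real.pi]
  · intro θ y ty
    set i1 : ℝ := (Real.sqrt (2 * Real.pi * r))⁻¹ with hi1
    set i2 : ℝ := (Real.sqrt (2 * Real.pi * 1))⁻¹ with hi2
    have hi1pos : 0 < i1 := inv_pos.2 (Real.sqrt_pos.2 (by positivity))
    have hi2pos : 0 < i2 := inv_pos.2 (Real.sqrt_pos.2 (by positivity))
    have hNum : (∫ μ : ℝ, gauss r (ty - μ) * gauss 1 (y - μ) * hs τ μ)
        = (i1 * i2 * Real.exp (-ty ^ 2 / (2 * r) - y ^ 2 / 2)) * Nvfun r v τ y ty := by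
      unfold Nvfun
      rw [← integral_const_mul]
      apply integral_congr_ae
      filter_upwards with μ
      unfold gauss
      have hE : Real.exp (-(ty - μ) ^ 2 / (2 * r)) * Real.exp (-(y - μ) ^ 2 / (2 * 1))
          = Real.exp (-ty ^ 2 / (2 * r) - y ^ 2 / 2) *
            Real.exp (-μ ^ 2 / (2 * v) + (y + ty / r) * μ) := by
        rw [← Real.exp_add, ← Real.exp_add]
        congr 1
        rw [hv]
        field_simp
        ring
      rw [← hi1, ← hi2]
      linear_combination (i1 * i2 * hs τ μ) * hE
    have hDen : (∫ μ : ℝ, gauss 1 (y - μ) * hs τ μ)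
        = (i2 * Real.exp (-y ^ 2 / 2)) * Dfun τ y := by
      unfold Dfun
      rw [← integral_const_mul]
      apply integral_congr_ae
      filter_upwards with μ
      unfold gauss
      have hE : Real.exp (-(y - μ) ^ 2 / (2 * 1))
          = Real.exp (-y ^ 2 / 2) * Real.exp (-μ ^ 2 / 2 + y * μ) := by
        rw [← Real.exp_add]
        congr 1
        ring
      rw [← hi2]
      linear_combination (i2 * hs τ μ) * hE
    have hpred : pred r (hs τ) y ty
        = ((i1 * i2 * Real.exp (-ty ^ 2 / (2 * r) - y ^ 2 / 2)) * Nvfun r v τ y ty)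
          / ((i2 * Real.exp (-y ^ 2 / 2)) * Dfun τ y) := by
      unfold pred
      rw [hNum, hDen]
    have hgauss : gauss r (ty - θ) = i1 * Real.exp (-(ty - θ) ^ 2 / (2 * r)) := rfl
    have hpredpos : 0 < pred r (hs τ) y ty := by
      rw [hpred]
      exact div_pos (mul_pos (mul_pos (mul_pos hi1pos hi2pos) (Real.exp_pos _)) (hN y ty))
        (mul_pos (mul_pos hi2pos (Real.exp_pos _)) (hD y))
    rw [Real.log_div (by rw [hgauss]; exact (mul_pos hi1pos (Real.exp_pos _)).ne') hpredpos.ne']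
    rw [hgauss, hpred]
    rw [Real.log_mul hi1pos.ne' (Real.exp_ne_zero _), Real.log_exp]
    rw [Real.log_div (mul_pos (mul_pos (mul_pos hi1pos hi2pos) (Real.exp_pos _)) (hN y ty)).ne'
         (mul_pos (mul_pos hi2pos (Real.exp_pos _)) (hD y)).ne']
    rw [Real.log_mul (mul_pos (mul_pos hi1pos hi2pos) (Real.exp_pos _)).ne' (hN y ty).ne']
    rw [Real.log_mul (mul_pos hi1pos hi2pos).ne' (Real.exp_ne_zero _)]
    rw [Real.log_mul hi1pos.ne' hi2pos.ne', Real.log_exp]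
    rw [Real.log_mul (mul_pos hi2pos (Real.exp_pos _)).ne' (hD y).ne']
    rw [Real.log_mul hi2pos.ne' (Real.exp_ne_zero _), Real.log_exp]
    field_simp
    ring
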